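/- Let f : ℝⁿ → ℝ be convex and L-Lipschitz, and let A ∈ ℝ^{m×n} with m < n. Suppose the minimum singular value of Aᵀ satisfies σ_min(Aᵀ) > 0. If λ·L < σ_min(Aᵀ), then any minimizer x* of x ↦ ‖y − Ax‖ + λ f(x) satisfies y = Ax*. -/

import Mathlib

open Matrix
set_option maxHeartbeats 1000000 in
theorem stmt15 {m n : ℕ} (hmn : m < n) (A : Matrix (Fin m) (Fin n) ℝ)
    (f : EuclideanSpace ℝ (Fin n) → ℝ) (hfconv : ConvexOn ℝ Set.univ f)
    (L : ℝ) (hL : 0 < L) (hfLip : ∀ x x', |f x - f x'| ≤ L * ‖x - x'‖)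
    (y : EuclideanSpace ℝ (Fin m)) (lam : ℝ) (hlam : 0 ≤ lam)
    (smin : ℝ) (hsmin : 0 < smin)
    (hs : ∀ v : EuclideanSpace ℝ (Fin m), smin * ‖v‖ ≤ ‖Matrix.toEuclideanLin Aᵀ v‖)
    (hlt : lam * L < smin)
    (x : EuclideanSpace ℝ (Fin n))
    (hopt : ∀ x', ‖y - Matrix.toEuclideanLin A x‖ + lam * f x
      ≤ ‖y - Matrix.toEuclideanLin A x'‖ + lam * f x') :
    y = Matrix.toEuclideanLin A x := by
  set S := Matrix.toEuclideanLin A with hS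
  set T := Matrix.toEuclideanLin Aᵀ with hT
  have hadj : T = LinearMap.adjoint S := by
    rw [hT, hS, ← Matrix.toEuclideanLin_conjTranspose_eq_adjoint,
      Matrix.conjTranspose_eq_transpose_of_trivial]
  have hinner : ∀ u : EuclideanSpace ℝ (Fin m),
      inner ℝ (T u) (T u) = (inner ℝ u (S (T u)) : ℝ) := by
    intro u
    rw [hadj, LinearMap.adjoint_inner_left]
  -- S ∘ T is injective
  have hinj : Function.Injective (S ∘ₗ T) := by
    rw [← LinearMap.ker_eq_bot, LinearMap.ker_eq_bot']
    intro u hu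
    have h0 : (inner ℝ (T u) (T u) : ℝ) = 0 := by
      rw [hinner u]
      simp only [LinearMap.comp_apply] at hu
      rw [hu, inner_zero_right]
    have hTu : T u = 0 := by
      rwa [inner_self_eq_zero] at h0
    have h5 := hs u
    rw [hTu, norm_zero] at h5
    have h6 : ‖u‖ ≤ 0 := by nlinarith [norm_nonneg u]
    exact norm_le_zero_iff.mp h6
  have hsurj : Function.Surjective (S ∘ₗ T) :=
    LinearMap.surjective_of_injective hinj
  set r := y - S x with hr
  obtain ⟨u, hu⟩ := hsurj r
  set w := T u with hw
  have hSw : S w = r := hu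
  -- bound ‖w‖
  have hw2 : ‖w‖ ^ 2 ≤ ‖u‖ * ‖r‖ := by
    have h1 : (inner ℝ w w : ℝ) = inner ℝ u r := by
      rw [hw, hinner u, ← hw]
      rw [hSw]
    calc ‖w‖ ^ 2 = inner ℝ w w := (real_inner_self_eq_norm_sq w).symm
      _ = inner ℝ u r := h1
      _ ≤ ‖u‖ * ‖r‖ := real_inner_le_norm u r
  have hub : smin * ‖u‖ ≤ ‖w‖ := hs u
  -- from optimality with x' = x + w
  have hopt' := hopt (x + w)
  have heq : y - S (x + w) = 0 := by
    rw [map_add, hSw, hr]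
    abel
  rw [heq, norm_zero, zero_add] at hopt'
  have hfb : f (x + w) - f x ≤ L * ‖w‖ := by
    have := hfLip (x + w) x
    have h2 : x + w - x = w := by abel
    rw [h2] at this
    exact (abs_le.mp this).2
  have hkey : ‖r‖ ≤ lam * L * ‖w‖ := by
    have h7 : lam * (f (x + w) - f x) ≤ lam * (L * ‖w‖) :=
      mul_le_mul_of_nonneg_left hfb hlam
    have h8 : lam * f (x + w) - lam * f x ≤ lam * L * ‖w‖ := by
      calc lam * f (x + w) - lam * f x = lam * (f (x + w) - f x) := by ring
        _ ≤ lam * (L * ‖w‖) := h7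
        _ = lam * L * ‖w‖ := by ring
    linarith
  -- conclude
  have hrz : ‖r‖ = 0 := by
    by_contra hne
    have hrpos : 0 < ‖r‖ := lt_of_le_of_ne (norm_nonneg r) (Ne.symm hne)
    have hwpos : 0 < ‖w‖ := by
      by_contra hwn
      push_neg at hwn
      have : ‖w‖ = 0 := le_antisymm hwn (norm_nonneg w)
      have : w = 0 := norm_eq_zero.mp this
      rw [this] at hSw
      simp at hSw
      rw [← hSw] at hrpos
      simp at hrpos
    -- smin * ‖w‖ ≤ ‖r‖ : from hw2 and hub
    have h3 : smin * ‖w‖ ^ 2 ≤ ‖w‖ * ‖r‖ := by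
      nlinarith [norm_nonneg u, norm_nonneg r]
    have h4 : smin * ‖w‖ ≤ ‖r‖ := by
      have := (mul_le_mul_iff_of_pos_right hwpos).mpr (le_refl smin)
      nlinarith [sq_nonneg (‖w‖ - ‖r‖)]
    nlinarith [mul_le_mul_of_nonneg_left hkey (le_of_lt hsmin),
      mul_le_mul_of_nonneg_left h4 (mul_nonneg hlam hL.le)]
  have hr0 : r = 0 := norm_eq_zero.mp hrz
  rw [hr, sub_eq_zero] at hr0
  exact hr0
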